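/- Let X be a complete CAT(0) space and T₁, T₂ : X → X satisfy property (P₂), with sequences defined from x₀ by d(y_n, T₁x_n) ≤ ε_n, d(x_{n+1}, T₂y_n) ≤ δ_n, Σε_n < ∞, Σδ_n < ∞. If (x_n) is bounded and Fix(T₂ ∘ T₁) = ∅ leads to a contradiction; i.e., boundedness of (x_n) implies Fix(T₂ ∘ T₁) ≠ ∅. Consequently, if Fix(T₂ ∘ T₁) = ∅ then both (x_n) and (y_n) are unbounded. -/

import Mathlib

open Filter Topology Metric Set

/-- A (chosen) geodesic bicombing witnessing that `X` is a geodesic space: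
`geo x y t` is the point at parameter fraction `t ∈ [0,1]` on a geodesic from `x` to `y`. -/
structure Geodesic (X : Type*) [MetricSpace X] where
  geo : X → X → ℝ → X
  geo_zero : ∀ x y, geo x y 0 = x
  geo_one : ∀ x y, geo x y 1 = y
  geo_dist : ∀ x y : X, ∀ s ∈ Set.Icc (0:ℝ) 1, ∀ t ∈ Set.Icc (0:ℝ) 1,
    dist (geo x y s) (geo x y t) = |s - t| * dist x y

/-- The CN (Bruhat–Tits) inequality characterizing CAT(0) among geodesic spaces. -/
def CAT0 (X : Type*) [MetricSpace X] : Prop :=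
  ∀ x y z m : X, dist x m = dist x y / 2 → dist y m = dist x y / 2 →
    dist z m ^ 2 ≤ dist z x ^ 2 / 2 + dist z y ^ 2 / 2 - dist x y ^ 2 / 4

/-- Property (P₂). -/
def PropP2 {X : Type*} [MetricSpace X] (T : X → X) : Prop :=
  ∀ x y : X, 2 * dist (T x) (T y) ^ 2 ≤
    dist x (T y) ^ 2 + dist y (T x) ^ 2 - dist x (T x) ^ 2 - dist y (T y) ^ 2

section Quad
variable {X : Type*} [MetricSpace X]

/-- quasilinearization quantity -/
noncomputable def Qd (a b c d : X) : ℝ :=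
  dist a d ^ 2 + dist b c ^ 2 - dist a c ^ 2 - dist b d ^ 2

lemma dist_geo_left (G : Geodesic X) (u v : X) :
    dist u (G.geo u v 2⁻¹) = dist u v / 2 := by
  have h := G.geo_dist u v 0 (by norm_num) 2⁻¹ (by norm_num)
  rw [G.geo_zero] at h
  rw [h]
  rw [show |(0:ℝ) - 2⁻¹| = 2⁻¹ by norm_num]
  ring

lemma dist_geo_right (G : Geodesic X) (u v : X) :
    dist v (G.geo u v 2⁻¹) = dist u v / 2 := by
  have h := G.geo_dist u v 1 (by norm_num) 2⁻¹ (by norm_num)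
  rw [G.geo_one] at h
  rw [h]
  rw [show |(1:ℝ) - 2⁻¹| = 2⁻¹ by norm_num]
  ring

lemma Qd_local (G : Geodesic X) (hX : CAT0 X) (a b c d : X) :
    Qd a b c d ≤ dist a b ^ 2 + dist c d ^ 2 := by
  set m₁ := G.geo a d 2⁻¹ with hm₁
  set m₂ := G.geo b c 2⁻¹ with hm₂
  have h1 : dist a m₁ = dist a d / 2 := dist_geo_left G a d
  have h2 : dist d m₁ = dist a d / 2 := dist_geo_right G a d
  have h3 : dist b m₂ = dist b c / 2 := dist_geo_left G b c
  have h4 : dist c m₂ = dist b c / 2 := dist_geo_right G b c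
  have cb := hX a d b m₁ h1 h2
  have cc := hX a d c m₁ h1 h2
  have cm := hX b c m₁ m₂ h3 h4
  have h0 : (0:ℝ) ≤ dist m₁ m₂ ^ 2 := sq_nonneg _
  rw [dist_comm b a] at cb
  rw [dist_comm c a] at cc
  rw [dist_comm m₁ b, dist_comm m₁ c] at cm
  unfold Qd
  linarith

lemma Qd_add_right (a b p q r : X) : Qd a b p q + Qd a b q r = Qd a b p r := by
  unfold Qd; ring

lemma Qd_add_left (p q r c d : X) : Qd p q c d + Qd q r c d = Qd p r c d := by
  unfold Qd; ring

lemma Qd_self_right (a b c : X) : Qd a b c c = 0 := by unfold Qd; ring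

lemma Qd_self_left (a c d : X) : Qd a a c d = 0 := by unfold Qd; ring

lemma Qd_sum_right (a b : X) (v : ℕ → X) (m : ℕ) :
    ∑ j ∈ Finset.range m, Qd a b (v j) (v (j+1)) = Qd a b (v 0) (v m) := by
  induction m with
  | zero => simp [Qd_self_right]
  | succ m ih => rw [Finset.sum_range_succ, ih, Qd_add_right]

lemma Qd_sum_left (c d : X) (u : ℕ → X) (n : ℕ) :
    ∑ i ∈ Finset.range n, Qd (u i) (u (i+1)) c d = Qd (u 0) (u n) c d := by
  induction n with
  | zero => simp [Qd_self_left]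
  | succ n ih => rw [Finset.sum_range_succ, ih, Qd_add_left]

lemma geo_param_mem {k n : ℕ} (hk : k ≤ n) (hn : 0 < n) :
    ((k : ℝ) / n) ∈ Set.Icc (0:ℝ) 1 := by
  constructor
  · positivity
  · rw [div_le_one (by exact_mod_cast hn)]
    exact_mod_cast hk

lemma dist_geo_succ (G : Geodesic X) (a b : X) {n i : ℕ} (hi : i < n) :
    dist (G.geo a b ((i:ℝ)/n)) (G.geo a b (((i:ℝ)+1)/n)) = dist a b / n := by
  have hn : 0 < n := Nat.pos_of_ne_zero (by omega)
  have h1 : ((i:ℝ)/n) ∈ Set.Icc (0:ℝ) 1 := geo_param_mem hi.le hn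
  have h2 : (((i:ℝ)+1)/n) ∈ Set.Icc (0:ℝ) 1 := by
    have := geo_param_mem (Nat.succ_le_of_lt hi) hn
    rwa [show ((i.succ : ℕ) : ℝ) = (i:ℝ) + 1 by push_cast; ring] at this
  rw [G.geo_dist a b _ h1 _ h2]
  have hn' : (0:ℝ) < n := by exact_mod_cast hn
  rw [show |(i:ℝ)/n - ((i:ℝ)+1)/n| = 1/n by
    rw [div_sub_div_same, show (i:ℝ) - ((i:ℝ)+1) = -1 by ring, abs_div, abs_neg, abs_one,
      abs_of_pos hn']]
  ring

lemma Qd_le_subdiv (G : Geodesic X) (hX : CAT0 X) (a b c d : X) (n m : ℕ)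
    (hn : 0 < n) (hm : 0 < m) :
    Qd a b c d ≤ m * dist a b ^ 2 / n + n * dist c d ^ 2 / m := by
  set u : ℕ → X := fun i => G.geo a b ((i:ℝ)/n) with hu
  set v : ℕ → X := fun j => G.geo c d ((j:ℝ)/m) with hv
  have hu0 : u 0 = a := by simp [hu, G.geo_zero]
  have hun : u n = b := by
    simp only [hu]
    rw [div_self (by exact_mod_cast hn.ne' : (n:ℝ) ≠ 0), G.geo_one]
  have hv0 : v 0 = c := by simp [hv, G.geo_zero]
  have hvm : v m = d := by
    simp only [hv]
    rw [div_self (by exact_mod_cast hm.ne' : (m:ℝ) ≠ 0), G.geo_one]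
  have key : Qd a b c d = ∑ i ∈ Finset.range n, ∑ j ∈ Finset.range m,
      Qd (u i) (u (i+1)) (v j) (v (j+1)) := by
    have h1 : Qd a b c d = ∑ i ∈ Finset.range n, Qd (u i) (u (i+1)) c d := by
      rw [Qd_sum_left, hu0, hun]
    rw [h1]
    refine Finset.sum_congr rfl fun i _ => ?_
    rw [Qd_sum_right (u i) (u (i+1)) v m, hv0, hvm]
  rw [key]
  have hterm : ∀ i ∈ Finset.range n, ∀ j ∈ Finset.range m,
      Qd (u i) (u (i+1)) (v j) (v (j+1)) ≤ (dist a b / n)^2 + (dist c d / m)^2 := by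
    intro i hi j hj
    have di : dist (u i) (u (i+1)) = dist a b / n := by
      have := dist_geo_succ G a b (Finset.mem_range.mp hi)
      simpa [hu, Nat.cast_add, Nat.cast_one] using this
    have dj : dist (v j) (v (j+1)) = dist c d / m := by
      have := dist_geo_succ G c d (Finset.mem_range.mp hj)
      simpa [hv, Nat.cast_add, Nat.cast_one] using this
    calc Qd (u i) (u (i+1)) (v j) (v (j+1))
        ≤ dist (u i) (u (i+1)) ^ 2 + dist (v j) (v (j+1)) ^ 2 := Qd_local G hX _ _ _ _
      _ = (dist a b / n)^2 + (dist c d / m)^2 := by rw [di, dj]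
  calc (∑ i ∈ Finset.range n, ∑ j ∈ Finset.range m, Qd (u i) (u (i+1)) (v j) (v (j+1)))
      ≤ ∑ i ∈ Finset.range n, ∑ j ∈ Finset.range m, ((dist a b / n)^2 + (dist c d / m)^2) := by
        refine Finset.sum_le_sum fun i hi => Finset.sum_le_sum fun j hj => hterm i hi j hj
    _ = n * (m * ((dist a b / n)^2 + (dist c d / m)^2)) := by
        simp [Finset.sum_const, Finset.card_range]; ring
    _ = m * dist a b ^ 2 / n + n * dist c d ^ 2 / m := by
        field_simp

/-- Cauchy–Schwarz for quasilinearization (Berg–Nikolaev) in CAT(0) spaces. -/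
lemma Qd_cs (G : Geodesic X) (hX : CAT0 X) (a b c d : X) :
    Qd a b c d ≤ 2 * dist a b * dist c d := by
  rcases eq_or_ne c d with rfl | hcd
  · rw [Qd_self_right]; positivity
  have hL : 0 < dist c d := dist_pos.mpr hcd
  set D := dist a b with hD
  set L := dist c d with hLdef
  have hD0 : 0 ≤ D := dist_nonneg
  apply le_of_forall_pos_le_add
  intro e he
  obtain ⟨k, hk⟩ := exists_nat_gt (2 * L ^ 2 / e)
  have hk0 : 0 < k := by
    have h2 : (0:ℝ) < 2 * L ^ 2 / e := by positivity
    exact_mod_cast h2.trans hk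
  have hkR : (0:ℝ) < (k:ℝ) := by exact_mod_cast hk0
  set nn := ⌈(k:ℝ) * D / L⌉₊ + 1 with hnndef
  have hnn : 0 < nn := Nat.succ_pos _
  have hnnR : (0:ℝ) < (nn:ℝ) := by exact_mod_cast hnn
  have hge : (k:ℝ) * D / L ≤ (nn:ℝ) := by
    refine (Nat.le_ceil _).trans ?_
    exact_mod_cast Nat.le_succ _
  have hgeL : (k:ℝ) * D ≤ (nn:ℝ) * L := by
    rwa [div_le_iff₀ hL] at hge
  have hle : (nn:ℝ) ≤ (k:ℝ) * D / L + 2 := by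
    have h1 := Nat.ceil_lt_add_one (show (0:ℝ) ≤ (k:ℝ) * D / L by positivity)
    have : (nn:ℝ) = (⌈(k:ℝ) * D / L⌉₊ : ℝ) + 1 := by exact_mod_cast rfl
    linarith
  have hleL : (nn:ℝ) * L ≤ (k:ℝ) * D + 2 * L := by
    have := mul_le_mul_of_nonneg_right hle hL.le
    have hx : ((k:ℝ) * D / L + 2) * L = (k:ℝ) * D + 2 * L := by
      field_simp
    linarith [hx ▸ this]
  have h := Qd_le_subdiv G hX a b c d nn k hnn hk0
  have ht1 : (k:ℝ) * D ^ 2 / nn ≤ D * L := by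
    rw [div_le_iff₀ hnnR]
    nlinarith [mul_le_mul_of_nonneg_right hgeL hD0]
  have ht2 : (nn:ℝ) * L ^ 2 / k ≤ D * L + e := by
    rw [div_le_iff₀ hkR]
    have h2 : 2 * L ^ 2 < e * (k:ℝ) := by
      rw [div_lt_iff₀ he] at hk
      linarith
    nlinarith [mul_le_mul_of_nonneg_right hleL hL.le]
  calc Qd a b c d ≤ (k:ℝ) * D ^ 2 / nn + (nn:ℝ) * L ^ 2 / k := h
    _ ≤ D * L + (D * L + e) := add_le_add ht1 ht2
    _ = 2 * D * L + e := by ring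

/-- Every mapping with property (P₂) on a CAT(0) space is nonexpansive. -/
lemma PropP2.nonexpansive (G : Geodesic X) (hX : CAT0 X) {T : X → X} (hT : PropP2 T)
    (u v : X) : dist (T u) (T v) ≤ dist u v := by
  have h := hT u v
  rw [dist_comm v (T u)] at h
  have hq := Qd_cs G hX u (T u) v (T v)
  unfold Qd at hq
  have h2 : dist (T u) (T v) ^ 2 ≤ dist u v ^ 2 := by
    nlinarith [sq_nonneg (dist u (T u) - dist v (T v))]
  have h3 := Real.sqrt_le_sqrt h2
  rwa [Real.sqrt_sq dist_nonneg, Real.sqrt_sq dist_nonneg] at h3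

end Quad

/-- For the inexact alternating iteration of two (P₂)-mappings in a complete CAT(0) space:
boundedness of `(x_n)` implies `Fix(T₂ ∘ T₁) ≠ ∅`; consequently, if `Fix(T₂ ∘ T₁) = ∅`
then both `(x_n)` and `(y_n)` are unbounded. -/
theorem bounded_iff_fixed_point {X : Type*} [MetricSpace X] [CompleteSpace X]
    (G : Geodesic X) (hX : CAT0 X)
    (T₁ T₂ : X → X) (h₁ : PropP2 T₁) (h₂ : PropP2 T₂)
    (ε δ : ℕ → ℝ) (hsumε : Summable ε) (hsumδ : Summable δ)
    (x₀ : X) (x y : ℕ → X) (hx0 : x 0 = x₀)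
    (hy : ∀ n : ℕ, dist (y n) (T₁ (x n)) ≤ ε n)
    (hx : ∀ n : ℕ, dist (x (n + 1)) (T₂ (y n)) ≤ δ n) :
    (Bornology.IsBounded (Set.range x) → ∃ u : X, T₂ (T₁ u) = u) ∧
    ((¬ ∃ u : X, T₂ (T₁ u) = u) →
      ¬ Bornology.IsBounded (Set.range x) ∧ ¬ Bornology.IsBounded (Set.range y)) := by
  have hne1 : ∀ u v : X, dist (T₁ u) (T₁ v) ≤ dist u v := h₁.nonexpansive G hX
  have hne2 : ∀ u v : X, dist (T₂ u) (T₂ v) ≤ dist u v := h₂.nonexpansive G hX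
  have hεn : ∀ n, 0 ≤ ε n := fun n => dist_nonneg.trans (hy n)
  have hδn : ∀ n, 0 ≤ δ n := fun n => dist_nonneg.trans (hx n)
  have hε0 : Tendsto ε atTop (𝓝 0) := hsumε.tendsto_atTop_zero
  have hδ0 : Tendsto δ atTop (𝓝 0) := hsumδ.tendsto_atTop_zero
  have main : Bornology.IsBounded (Set.range x) → ∃ u : X, T₂ (T₁ u) = u := by
    intro hb
    obtain ⟨R, hR⟩ := hb.subset_closedBall x₀
    have hRx : ∀ n, dist (x n) x₀ ≤ R := fun n => by
      have := hR (mem_range_self n); rwa [Metric.mem_closedBall] at this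
    set C : X → ℝ := fun u => R + dist x₀ u with hCdef
    have hCb : ∀ u n, dist (x n) u ≤ C u := fun u n =>
      (dist_triangle (x n) x₀ u).trans (add_le_add_left (hRx n) _)
    have hC0 : ∀ u, 0 ≤ C u := fun u => dist_nonneg.trans (hCb u 0)
    set φ : X → ℝ := fun u => limsup (fun n => dist (x n) u ^ 2) atTop with hφdef
    have hbd : ∀ u, IsBoundedUnder (· ≤ ·) atTop (fun n => dist (x n) u ^ 2) := by
      intro u
      refine isBoundedUnder_of ⟨C u ^ 2, fun n => ?_⟩
      have h1 := hCb u n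
      have h2 : (0:ℝ) ≤ dist (x n) u := dist_nonneg
      nlinarith
    have hcb : ∀ u, IsCoboundedUnder (· ≤ ·) atTop (fun n => dist (x n) u ^ 2) := by
      intro u
      have hb2 : IsBoundedUnder (· ≥ ·) atTop (fun n => dist (x n) u ^ 2) :=
        isBoundedUnder_of ⟨0, fun n => sq_nonneg _⟩
      exact hb2.isCoboundedUnder_le
    have hφ0 : ∀ u, 0 ≤ φ u := fun u =>
      le_limsup_of_frequently_le (Frequently.of_forall fun n => sq_nonneg _) (hbd u)
    have hev : ∀ u r, φ u < r → ∀ᶠ n in atTop, dist (x n) u ^ 2 < r := fun u r h =>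
      eventually_lt_of_limsup_lt h (hbd u)
    have hls : ∀ (u : X) (r : ℝ), (∀ᶠ n in atTop, dist (x n) u ^ 2 ≤ r) → φ u ≤ r :=
      fun u r h => limsup_le_of_le (hcb u) h
    have hE2 : ∀ u v : X, φ (G.geo u v 2⁻¹) ≤ φ u / 2 + φ v / 2 - dist u v ^ 2 / 4 := by
      intro u v
      have hcn : ∀ n, dist (x n) (G.geo u v 2⁻¹) ^ 2 ≤
          dist (x n) u ^ 2 / 2 + dist (x n) v ^ 2 / 2 - dist u v ^ 2 / 4 :=
        fun n => hX u v (x n) _ (dist_geo_left G u v) (dist_geo_right G u v)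
      apply le_of_forall_pos_le_add
      intro e he
      have h1 := hev u (φ u + e) (by linarith)
      have h2 := hev v (φ v + e) (by linarith)
      apply hls
      filter_upwards [h1, h2] with n hn1 hn2
      have := hcn n
      linarith
    clear_value C φ
    obtain ⟨μ, hμdef⟩ : ∃ μ, μ = sInf (Set.range φ) := ⟨_, rfl⟩
    have hbb : BddBelow (Set.range φ) := ⟨0, by rintro r ⟨u, rfl⟩; exact hφ0 u⟩
    have hμle : ∀ u, μ ≤ φ u := fun u =>
      le_trans (le_of_eq hμdef) (csInf_le hbb (mem_range_self u))
    have hmin : ∀ k : ℕ, ∃ u : X, φ u < μ + 1 / ((k:ℝ) + 1) := by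
      intro k
      have hpos : (0:ℝ) < 1 / ((k:ℝ) + 1) := by positivity
      have hlt : sInf (Set.range φ) < μ + 1 / ((k:ℝ) + 1) := by
        rw [← hμdef]; exact lt_add_of_pos_right μ hpos
      obtain ⟨r, ⟨u, rfl⟩, hr⟩ := exists_lt_of_csInf_lt ⟨φ x₀, mem_range_self x₀⟩ hlt
      exact ⟨u, hr⟩
    choose u hu using hmin
    have hdu : ∀ j k : ℕ, dist (u j) (u k) ^ 2 ≤
        2 * (1 / ((j:ℝ) + 1)) + 2 * (1 / ((k:ℝ) + 1)) := by
      intro j k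
      have h2 := hE2 (u j) (u k)
      have h3 := hμle (G.geo (u j) (u k) 2⁻¹)
      have hj := hu j
      have hk := hu k
      linarith
    have hcauchy : CauchySeq u := by
      rw [Metric.cauchySeq_iff']
      intro e he
      obtain ⟨N, hN⟩ := exists_nat_gt (4 / e ^ 2)
      refine ⟨N, fun n hn => ?_⟩
      have h1 := hdu n N
      have hcast : ((N:ℝ) + 1) ≤ ((n:ℝ) + 1) := by exact_mod_cast Nat.succ_le_succ hn
      have hlt : dist (u n) (u N) ^ 2 < e ^ 2 := by
        have hb1 : 1 / ((n:ℝ) + 1) ≤ 1 / ((N:ℝ) + 1) :=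
          one_div_le_one_div_of_le (by positivity) hcast
        have hb2 : 4 * (1 / ((N:ℝ) + 1)) < e ^ 2 := by
          rw [mul_one_div, div_lt_iff₀ (by positivity)]
          have h4 : 4 / e ^ 2 < (N:ℝ) := hN
          rw [div_lt_iff₀ (by positivity : (0:ℝ) < e ^ 2)] at h4
          nlinarith [sq_nonneg e]
        linarith
      exact lt_of_pow_lt_pow_left₀ 2 he.le hlt
    obtain ⟨z, hz⟩ := cauchySeq_tendsto_of_complete hcauchy
    have hE1 : ∀ v : X, φ z ≤ φ v + dist z v * (2 * C z + 3 * dist z v) := by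
      intro v
      apply le_of_forall_pos_le_add
      intro e he
      have h1 := hev v (φ v + e) (by linarith)
      apply hls
      filter_upwards [h1] with n hn
      have t1 : dist (x n) z ≤ dist (x n) v + dist v z := dist_triangle _ _ _
      have t2 : dist (x n) v ≤ dist (x n) z + dist z v := dist_triangle _ _ _
      have hc := hCb z n
      have d2 : (0:ℝ) ≤ dist z v := dist_nonneg
      have hvz : dist v z = dist z v := dist_comm _ _
      rw [hvz] at t1
      have key : dist (x n) z ^ 2 ≤ (dist (x n) v + dist z v) ^ 2 :=
        pow_le_pow_left₀ dist_nonneg t1 2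
      have key2 : dist (x n) v * dist z v ≤ (C z + dist z v) * dist z v :=
        mul_le_mul_of_nonneg_right (t2.trans (add_le_add_left hc _)) d2
      nlinarith [key, key2, hn]
    have hφzμ : φ z ≤ μ := by
      apply le_of_forall_pos_le_add
      intro e he
      have hd0 : Tendsto (fun k => dist z (u k)) atTop (𝓝 0) := by
        simpa [dist_comm] using tendsto_iff_dist_tendsto_zero.mp hz
      have hfac : Tendsto (fun k => dist z (u k) * (2 * C z + 3 * dist z (u k)))
          atTop (𝓝 0) := by
        have h5 := hd0.mul ((tendsto_const_nhds (x := 2 * C z)).add (hd0.const_mul 3))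
        simpa using h5
      have hev1 : ∀ᶠ k in atTop,
          dist z (u k) * (2 * C z + 3 * dist z (u k)) < e / 2 :=
        hfac.eventually_lt_const (by linarith)
      have hev2 : ∀ᶠ k : ℕ in atTop, 1 / ((k:ℝ) + 1) < e / 2 :=
        tendsto_one_div_add_atTop_nhds_zero_nat.eventually_lt_const (by linarith)
      obtain ⟨k, hk1, hk2⟩ := (hev1.and hev2).exists
      have h6 := hE1 (u k)
      have h7 := hu k
      calc φ z ≤ φ (u k) + dist z (u k) * (2 * C z + 3 * dist z (u k)) := h6
        _ ≤ (μ + 1 / ((k:ℝ) + 1)) + e / 2 := add_le_add h7.le hk1.le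
        _ ≤ (μ + e / 2) + e / 2 := add_le_add (add_le_add_right hk2.le μ) le_rfl
        _ = μ + e := by ring
    have hφz : φ z = μ := le_antisymm hφzμ (hμle z)
    obtain ⟨w, hw⟩ : ∃ w, w = T₂ (T₁ z) := ⟨_, rfl⟩
    have hE3 : φ w ≤ φ z := by
      have hchain : ∀ n, dist (x (n+1)) w ≤ (ε n + δ n) + dist (x n) z := by
        intro n
        have t1 : dist (x (n+1)) w ≤ dist (x (n+1)) (T₂ (y n)) + dist (T₂ (y n)) w :=
          dist_triangle _ _ _
        have t2 : dist (T₂ (y n)) w ≤ dist (T₂ (y n)) (T₂ (T₁ (x n))) +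
            dist (T₂ (T₁ (x n))) w := dist_triangle _ _ _
        have t3 : dist (T₂ (y n)) (T₂ (T₁ (x n))) ≤ dist (y n) (T₁ (x n)) := hne2 _ _
        have t4 : dist (T₂ (T₁ (x n))) w ≤ dist (T₁ (x n)) (T₁ z) := by
          rw [hw]; exact hne2 _ _
        have t5 : dist (T₁ (x n)) (T₁ z) ≤ dist (x n) z := hne1 _ _
        have t6 := hy n
        have t7 := hx n
        linarith
      apply le_of_forall_pos_le_add
      intro e he
      obtain ⟨Ce, hCedef⟩ : ∃ c, c = 2 * C z + (∑' n, ε n) + (∑' n, δ n) + 1 := ⟨_, rfl⟩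
      have htε0 : 0 ≤ ∑' n, ε n := tsum_nonneg hεn
      have htδ0 : 0 ≤ ∑' n, δ n := tsum_nonneg hδn
      have hCe0 : 0 < Ce := by
        have := hC0 z
        rw [hCedef]; linarith
      have hcbound : ∀ n, ε n + δ n ≤ (∑' n, ε n) + (∑' n, δ n) := fun n =>
        add_le_add (Summable.le_tsum hsumε n fun j _ => hεn j) (Summable.le_tsum hsumδ n fun j _ => hδn j)
      have hsmall : ∀ᶠ n in atTop, (ε n + δ n) * Ce < e / 2 := by
        have h5 : Tendsto (fun n => (ε n + δ n) * Ce) atTop (𝓝 0) := by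
          have h6 := (hε0.add hδ0).mul_const Ce
          simpa using h6
        exact h5.eventually_lt_const (by linarith)
      have hev3 := hev z (φ z + e / 2) (by linarith)
      have hcomb : ∀ᶠ n in atTop, dist (x (n+1)) w ^ 2 ≤ φ z + e := by
        filter_upwards [hsmall, hev3] with n h5 h6
        have hch := hchain n
        have hcn := hCb z n
        have hc1 : 0 ≤ ε n + δ n := by
          have := hεn n; have := hδn n; linarith
        have h7 : dist (x (n+1)) w ^ 2 ≤ (dist (x n) z + (ε n + δ n)) ^ 2 :=
          pow_le_pow_left₀ dist_nonneg (by linarith) 2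
        have h8 := hcbound n
        have h9 : dist (x n) z ≤ C z := hcn
        nlinarith [h7, h6, h5, hc1, h8, h9, hCedef, dist_nonneg (x := x n) (y := z)]
      obtain ⟨N, hN⟩ := eventually_atTop.mp hcomb
      apply hls
      rw [eventually_atTop]
      refine ⟨N + 1, fun n hn => ?_⟩
      obtain ⟨m, rfl⟩ : ∃ m, n = m + 1 := ⟨n - 1, by omega⟩
      exact hN m (by omega)
    have hφwμ : φ w = μ := le_antisymm (hφz ▸ hE3) (hμle w)
    have hmid := hE2 z w
    have h3 := hμle (G.geo z w 2⁻¹)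
    have hd2 : dist z w ^ 2 ≤ 0 := by rw [hφz, hφwμ] at hmid; linarith
    have hdzw : dist z w = 0 := by
      have h4 : dist z w ^ 2 = 0 := le_antisymm hd2 (sq_nonneg _)
      exact pow_eq_zero_iff two_ne_zero |>.mp h4
    refine ⟨z, ?_⟩
    rw [← hw]
    exact (dist_eq_zero.mp hdzw).symm
  refine ⟨main, fun hfix => ?_⟩
  have hxnb : ¬ Bornology.IsBounded (Set.range x) := fun hb => hfix (main hb)
  refine ⟨hxnb, fun hyb => hxnb ?_⟩
  obtain ⟨R, hR⟩ := hyb.subset_closedBall (y 0)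
  have hRy : ∀ n, dist (y n) (y 0) ≤ R := fun n => by
    have := hR (mem_range_self n); rwa [Metric.mem_closedBall] at this
  have hR0 : 0 ≤ R := dist_nonneg.trans (hRy 0)
  have htδ : ∀ n, δ n ≤ ∑' n, δ n := fun n => Summable.le_tsum hsumδ n fun j _ => hδn j
  have htδ0 : 0 ≤ ∑' n, δ n := tsum_nonneg hδn
  set r := dist x₀ (T₂ (y 0)) + ((∑' n, δ n) + R) with hrdef
  apply Metric.isBounded_closedBall (x := x₀) (r := r) |>.subset
  rintro p ⟨n, rfl⟩
  rw [Metric.mem_closedBall]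
  match n with
  | 0 =>
    rw [hx0, dist_self, hrdef]
    positivity
  | Nat.succ m =>
    have t1 : dist (x (m+1)) x₀ ≤ dist (x (m+1)) (T₂ (y m)) + dist (T₂ (y m)) (T₂ (y 0)) +
        dist (T₂ (y 0)) x₀ := dist_triangle4 _ _ _ _
    have t2 : dist (T₂ (y m)) (T₂ (y 0)) ≤ dist (y m) (y 0) := hne2 _ _
    have t3 : dist (T₂ (y 0)) x₀ = dist x₀ (T₂ (y 0)) := dist_comm _ _
    have t4 := hx m
    have t5 := hRy m
    have t6 := htδ m
    rw [hrdef]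
    linarith
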